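/- An indecomposable representation M of a finite quiver K is such that for every choice of basis 𝓑, the coefficient quiver Γ(M, 𝓑) is connected. Conversely, if Γ(M, 𝓑) is connected for all bases 𝓑, then M is indecomposable. -/

import Mathlib

set_option maxHeartbeats 1000000

open Module LinearMap Matrix

lemma exists_conj_diag {k : Type} [Field k] {n : ℕ} (A : Matrix (Fin n) (Fin n) k)
    (h : A * A = A) :
    ∃ (g : Matrix (Fin n) (Fin n) k) (r : ℕ), IsUnit g ∧
      g * A * g⁻¹ = Matrix.diagonal (fun i : Fin n => if (i : ℕ) < r then (1 : k) else 0) := by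
  classical
  set f := Matrix.toLin' A with hfdef
  have hf : f ∘ₗ f = f := by
    rw [hfdef, ← Matrix.toLin'_mul, h]
  obtain ⟨p, hp⟩ := (LinearMap.isProj_iff_isIdempotentElem f).mpr hf
  have hcompl : IsCompl p (LinearMap.ker f) := hp.isCompl
  set r := finrank k p with hr
  set s := finrank k (LinearMap.ker f) with hs
  have hdim : r + s = n := by
    rw [hr, hs, Submodule.finrank_add_eq_of_isCompl hcompl, Module.finrank_fin_fun]
  let bp := Module.finBasis k p
  let bk := Module.finBasis k (LinearMap.ker f)
  let eq := Submodule.prodEquivOfIsCompl p (LinearMap.ker f) hcompl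
  let b : Basis (Fin n) k (Fin n → k) :=
    ((bp.prod bk).map eq).reindex (finSumFinEquiv.trans (finCongr hdim))
  have hbmem : ∀ j : Fin n, ((j : ℕ) < r → b j ∈ p) ∧ (r ≤ (j : ℕ) → b j ∈ LinearMap.ker f) := by
    intro j
    have hbj : b j = eq ((bp.prod bk) ((finSumFinEquiv.trans (finCongr hdim)).symm j)) := by
      simp [b, Basis.reindex_apply, Basis.map_apply]
    constructor
    · intro hj
      have hsymm : (finSumFinEquiv.trans (finCongr hdim)).symm j = Sum.inl ⟨(j : ℕ), hj⟩ := by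
        apply (finSumFinEquiv.trans (finCongr hdim)).injective
        simp [Fin.ext_iff]
      rw [hbj, hsymm]
      have h1 : (bp.prod bk) (Sum.inl ⟨(j : ℕ), hj⟩) = (bp ⟨(j : ℕ), hj⟩, 0) :=
        Prod.ext (Basis.prod_apply_inl_fst _ _ _) (Basis.prod_apply_inl_snd _ _ _)
      rw [h1, Submodule.coe_prodEquivOfIsCompl']
      simp
    · intro hj
      have hj2 : (j : ℕ) - r < s := by omega
      have hsymm : (finSumFinEquiv.trans (finCongr hdim)).symm j = Sum.inr ⟨(j : ℕ) - r, hj2⟩ := by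
        apply (finSumFinEquiv.trans (finCongr hdim)).injective
        simp [Fin.ext_iff]
        omega
      rw [hbj, hsymm]
      have h1 : (bp.prod bk) (Sum.inr ⟨(j : ℕ) - r, hj2⟩) = (0, bk ⟨(j : ℕ) - r, hj2⟩) :=
        Prod.ext (Basis.prod_apply_inr_fst _ _ _) (Basis.prod_apply_inr_snd _ _ _)
      rw [h1, Submodule.coe_prodEquivOfIsCompl']
      simp
  have hP : LinearMap.toMatrix b b f =
      Matrix.diagonal (fun i : Fin n => if (i : ℕ) < r then (1 : k) else 0) := by
    ext i j
    rw [LinearMap.toMatrix_apply]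
    by_cases hj : (j : ℕ) < r
    · have : f (b j) = b j := hp.map_id _ ((hbmem j).1 hj)
      rw [this, Basis.repr_self, Finsupp.single_apply, Matrix.diagonal_apply]
      by_cases hij : i = j
      · subst hij; simp [hj]
      · simp [hij, Ne.symm hij]
    · have : f (b j) = 0 := (hbmem j).2 (le_of_not_gt hj)
      rw [this, map_zero, Finsupp.zero_apply, Matrix.diagonal_apply]
      by_cases hij : i = j
      · subst hij; simp [hj]
      · simp [hij]
  let std := Pi.basisFun k (Fin n)
  have key : b.toMatrix std * LinearMap.toMatrix std std f * std.toMatrix b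
      = LinearMap.toMatrix b b f :=
    basis_toMatrix_mul_linearMap_toMatrix_mul_basis_toMatrix b std b std f
  have hA : LinearMap.toMatrix std std f = A := by
    rw [LinearMap.toMatrix_eq_toMatrix', hfdef, LinearMap.toMatrix'_toLin']
  have hunit : IsUnit (b.toMatrix std) := by
    have := b.invertibleToMatrix std
    exact isUnit_of_invertible _
  have hinv : (b.toMatrix std)⁻¹ = std.toMatrix b :=
    Matrix.inv_eq_right_inv (Basis.toMatrix_mul_toMatrix_flip _ _)
  exact ⟨b.toMatrix std, r, hunit, by rw [hinv, ← hP, ← key, hA]⟩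

lemma conj_mul_eq {k : Type} [Field k] {m n : ℕ} {g₁ : Matrix (Fin m) (Fin m) k}
    {g₂ : Matrix (Fin n) (Fin n) k} (h₁ : IsUnit g₁.det) (h₂ : IsUnit g₂.det)
    (D₁ : Matrix (Fin m) (Fin m) k) (D₂ : Matrix (Fin n) (Fin n) k)
    (A : Matrix (Fin m) (Fin n) k) :
    (g₁⁻¹ * D₁ * g₁) * A = A * (g₂⁻¹ * D₂ * g₂) ↔
      D₁ * (g₁ * A * g₂⁻¹) = (g₁ * A * g₂⁻¹) * D₂ := by
  constructor
  · intro h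
    have h' : g₁ * (g₁⁻¹ * D₁ * g₁ * A) * g₂⁻¹ = g₁ * (A * (g₂⁻¹ * D₂ * g₂)) * g₂⁻¹ := by
      rw [h]
    simp only [← Matrix.mul_assoc] at h' ⊢
    rw [Matrix.mul_nonsing_inv_cancel_right _ _ h₂] at h'
    rw [Matrix.mul_nonsing_inv _ h₁, Matrix.one_mul] at h'
    exact h'
  · intro h
    have h' : g₁⁻¹ * (D₁ * (g₁ * A * g₂⁻¹)) * g₂ = g₁⁻¹ * (g₁ * A * g₂⁻¹ * D₂) * g₂ := by
      rw [h]
    simp only [← Matrix.mul_assoc] at h' ⊢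
    rw [Matrix.nonsing_inv_mul_cancel_right _ _ h₂] at h'
    rw [Matrix.nonsing_inv_mul _ h₁, Matrix.one_mul] at h'
    exact h'

lemma indicator_comm_iff {k : Type} [Field k] {m n : ℕ} (P : Fin m → Prop) (Q : Fin n → Prop)
    [DecidablePred P] [DecidablePred Q] (N : Matrix (Fin m) (Fin n) k) :
    (Matrix.diagonal (fun i => if P i then (1 : k) else 0) * N =
      N * Matrix.diagonal (fun j => if Q j then (1 : k) else 0)) ↔
    ∀ i j, N i j ≠ 0 → (P i ↔ Q j) := by
  constructor
  · intro h i j h0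
    have hij := congrFun (congrFun h i) j
    rw [Matrix.diagonal_mul, Matrix.mul_diagonal] at hij
    by_cases h1 : P i <;> by_cases h2 : Q j
    · exact iff_of_true h1 h2
    · exfalso; apply h0; simpa [h1, h2] using hij
    · exfalso; apply h0; simpa [h1, h2] using hij.symm
    · exact iff_of_false h1 h2
  · intro h
    ext i j
    rw [Matrix.diagonal_mul, Matrix.mul_diagonal]
    by_cases h0 : N i j = 0
    · simp [h0]
    · rw [if_congr (h i j h0) rfl rfl, mul_comm]

lemma reach_inv {α : Type} {G : SimpleGraph α} {p : α → Prop}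
    (h : ∀ x y, G.Adj x y → (p x ↔ p y)) {x y : α} (hr : G.Reachable x y) : p x ↔ p y := by
  obtain ⟨w⟩ := hr
  induction w with
  | nil => exact Iff.rfl
  | cons h' _ ih => exact (h _ _ h').trans ih

/-- A representation of a finite quiver (given by dimensions `d` and matrices `M`) is
indecomposable if and only if for every choice of basis (i.e. every conjugation by a
family of invertible matrices `g`) the coefficient quiver is connected. -/
theorem stmt_11 {k V E : Type} [Field k] [Fintype V] [Fintype E]
    (src tgt : E → V) (d : V → ℕ)
    (M : ∀ e, Matrix (Fin (d (tgt e))) (Fin (d (src e))) k) :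
    ((∃ v, 0 < d v) ∧
      ∀ f : ∀ v, Matrix (Fin (d v)) (Fin (d v)) k,
        (∀ e, f (tgt e) * M e = M e * f (src e)) → (∀ v, f v * f v = f v) →
        (∀ v, f v = 0) ∨ (∀ v, f v = 1)) ↔
    (∀ g : ∀ v, Matrix (Fin (d v)) (Fin (d v)) k, (∀ v, IsUnit (g v)) →
      (SimpleGraph.fromRel (fun x y : Σ v, Fin (d v) =>
        ∃ e, ∃ i : Fin (d (tgt e)), ∃ j : Fin (d (src e)),
          (g (tgt e) * M e * (g (src e))⁻¹) i j ≠ 0 ∧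
            x = ⟨src e, j⟩ ∧ y = ⟨tgt e, i⟩)).Connected) := by
  classical
  constructor
  · rintro ⟨⟨v₀, hv₀⟩, hind⟩ g hg
    set G := SimpleGraph.fromRel (fun x y : Σ v, Fin (d v) =>
        ∃ e, ∃ i : Fin (d (tgt e)), ∃ j : Fin (d (src e)),
          (g (tgt e) * M e * (g (src e))⁻¹) i j ≠ 0 ∧
            x = ⟨src e, j⟩ ∧ y = ⟨tgt e, i⟩) with hG
    rw [SimpleGraph.connected_iff]
    refine ⟨?_, ⟨⟨v₀, ⟨0, hv₀⟩⟩⟩⟩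
    intro x y
    by_contra hxy
    have hdet : ∀ v, IsUnit (g v).det := fun v => (Matrix.isUnit_iff_isUnit_det _).mp (hg v)
    set D : ∀ v, Matrix (Fin (d v)) (Fin (d v)) k := fun v =>
      Matrix.diagonal (fun i => if G.Reachable x ⟨v, i⟩ then (1 : k) else 0) with hD
    set f : ∀ v, Matrix (Fin (d v)) (Fin (d v)) k := fun v => (g v)⁻¹ * D v * g v with hfdef
    have hcomm : ∀ e, f (tgt e) * M e = M e * f (src e) := by
      intro e
      show ((g (tgt e))⁻¹ * D (tgt e) * g (tgt e)) * M e
        = M e * ((g (src e))⁻¹ * D (src e) * g (src e))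
      refine (conj_mul_eq (hdet _) (hdet _) _ _ _).mpr ?_
      refine (indicator_comm_iff _ _ _).mpr ?_
      intro i j h0
      by_cases heq : (⟨src e, j⟩ : Σ v, Fin (d v)) = ⟨tgt e, i⟩
      · rw [heq]
      · have hadj : G.Adj ⟨src e, j⟩ ⟨tgt e, i⟩ := by
          rw [hG, SimpleGraph.fromRel_adj]
          exact ⟨heq, Or.inl ⟨e, i, j, h0, rfl, rfl⟩⟩
        exact ⟨fun hr => hr.trans hadj.symm.reachable, fun hr => hr.trans hadj.reachable⟩
    have hidem : ∀ v, f v * f v = f v := by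
      intro v
      have hDD : D v * D v = D v := by
        show Matrix.diagonal _ * Matrix.diagonal _ = Matrix.diagonal _
        rw [Matrix.diagonal_mul_diagonal]
        apply congrArg Matrix.diagonal
        funext i
        by_cases hc : G.Reachable x ⟨v, i⟩ <;> simp [hc]
      show ((g v)⁻¹ * D v * g v) * ((g v)⁻¹ * D v * g v) = (g v)⁻¹ * D v * g v
      simp only [Matrix.mul_assoc]
      rw [Matrix.mul_nonsing_inv_cancel_left _ _ (hdet v), ← Matrix.mul_assoc (D v), hDD]
    have hDf : ∀ v, D v = g v * f v * (g v)⁻¹ := by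
      intro v
      show D v = g v * ((g v)⁻¹ * D v * g v) * (g v)⁻¹
      simp only [Matrix.mul_assoc]
      rw [Matrix.mul_nonsing_inv _ (hdet v), Matrix.mul_one,
        Matrix.mul_nonsing_inv_cancel_left _ _ (hdet v)]
    obtain h0 | h1 := hind f hcomm hidem
    · have hx : G.Reachable x ⟨x.1, x.2⟩ := by rw [Sigma.eta]
      have hz := hDf x.1
      rw [h0 x.1, Matrix.mul_zero, Matrix.zero_mul] at hz
      have := congrFun (congrFun hz x.2) x.2
      simp only [hD, Matrix.diagonal_apply_eq, Matrix.zero_apply, if_pos hx] at this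
      exact one_ne_zero this
    · have hy : ¬ G.Reachable x ⟨y.1, y.2⟩ := by rw [Sigma.eta]; exact hxy
      have hz := hDf y.1
      rw [h1 y.1, Matrix.mul_one, Matrix.mul_nonsing_inv _ (hdet y.1)] at hz
      have := congrFun (congrFun hz y.2) y.2
      simp only [hD, Matrix.diagonal_apply_eq, Matrix.one_apply_eq, if_neg hy] at this
      exact zero_ne_one this
  · intro hconn
    constructor
    · obtain ⟨⟨v, i⟩⟩ := (hconn (fun _ => 1) (fun _ => isUnit_one)).nonempty
      exact ⟨v, i.pos⟩
    · intro f hcomm hidem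
      by_contra hcon
      push_neg at hcon
      obtain ⟨⟨v₀, hv₀⟩, ⟨v₁, hv₁⟩⟩ := hcon
      choose g r hg hconj using fun v => exists_conj_diag (f v) (hidem v)
      have hdet : ∀ v, IsUnit (g v).det := fun v => (Matrix.isUnit_iff_isUnit_det _).mp (hg v)
      have hfD : ∀ v, f v = (g v)⁻¹ *
          Matrix.diagonal (fun i : Fin (d v) => if (i : ℕ) < r v then (1 : k) else 0) * g v := by
        intro v
        have h2 := congrArg (fun X => (g v)⁻¹ * X * g v) (hconj v)
        simp only [← Matrix.mul_assoc] at h2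
        rw [Matrix.nonsing_inv_mul _ (hdet v), Matrix.one_mul,
          Matrix.nonsing_inv_mul_cancel_right _ _ (hdet v)] at h2
        exact h2
      have hc := hconn g hg
      have hDN : ∀ e, Matrix.diagonal
            (fun i : Fin (d (tgt e)) => if (i : ℕ) < r (tgt e) then (1 : k) else 0) *
            (g (tgt e) * M e * (g (src e))⁻¹) =
          (g (tgt e) * M e * (g (src e))⁻¹) *
            Matrix.diagonal
              (fun j : Fin (d (src e)) => if (j : ℕ) < r (src e) then (1 : k) else 0) := by
        intro e
        refine (conj_mul_eq (hdet _) (hdet _) _ _ _).mp ?_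
        rw [← hfD (tgt e), ← hfD (src e)]
        exact hcomm e
      have hkey : ∀ a b : Σ v, Fin (d v),
          (SimpleGraph.fromRel (fun x y : Σ v, Fin (d v) =>
            ∃ e, ∃ i : Fin (d (tgt e)), ∃ j : Fin (d (src e)),
              (g (tgt e) * M e * (g (src e))⁻¹) i j ≠ 0 ∧
                x = ⟨src e, j⟩ ∧ y = ⟨tgt e, i⟩)).Adj a b →
          (((a.2 : ℕ) < r a.1) ↔ ((b.2 : ℕ) < r b.1)) := by
        intro a b hadj
        rw [SimpleGraph.fromRel_adj] at hadj
        obtain ⟨-, ⟨e, i, j, h0, ha, hb⟩ | ⟨e, i, j, h0, ha, hb⟩⟩ := hadj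
        · subst ha; subst hb
          exact ((indicator_comm_iff _ _ _).mp (hDN e) i j h0).symm
        · subst ha; subst hb
          exact (indicator_comm_iff _ _ _).mp (hDN e) i j h0
      obtain ⟨i₀, hi₀⟩ : ∃ i : Fin (d v₀), (i : ℕ) < r v₀ := by
        by_contra hno
        push_neg at hno
        apply hv₀
        rw [hfD v₀]
        have hz : Matrix.diagonal
            (fun i : Fin (d v₀) => if (i : ℕ) < r v₀ then (1 : k) else 0) = 0 := by
          have : (fun i : Fin (d v₀) => if (i : ℕ) < r v₀ then (1 : k) else 0)
              = fun _ => (0 : k) := funext fun i => if_neg (by exact Nat.not_lt.mpr (hno i))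
          rw [this, Matrix.diagonal_zero]
        rw [hz, Matrix.mul_zero, Matrix.zero_mul]
      obtain ⟨i₁, hi₁⟩ : ∃ i : Fin (d v₁), ¬ (i : ℕ) < r v₁ := by
        by_contra hno
        push_neg at hno
        apply hv₁
        rw [hfD v₁]
        have hz : Matrix.diagonal
            (fun i : Fin (d v₁) => if (i : ℕ) < r v₁ then (1 : k) else 0) = 1 := by
          have : (fun i : Fin (d v₁) => if (i : ℕ) < r v₁ then (1 : k) else 0)
              = fun _ => (1 : k) := funext fun i => if_pos (hno i)
          rw [this, Matrix.diagonal_one]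
        rw [hz, Matrix.mul_one, Matrix.nonsing_inv_mul _ (hdet v₁)]
      have hr := hc.preconnected ⟨v₀, i₀⟩ ⟨v₁, i₁⟩
      exact hi₁ ((reach_inv (p := fun z : Σ v, Fin (d v) => (z.2 : ℕ) < r z.1) hkey hr).mp hi₀)
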